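/- Let a, b, c ≥ 1 be integers with gcd(a,b) = 1, set r = ac and s = bc, let μ ∈ ℤ with gcd(μ, 2rs) = 1 and let d be an integer with d ≡ μ² (mod 4rs). Let l be a prime and x, y ∈ ℤ satisfy x² − dy² = 4a²b²c², l ∣ x, l ∣ y, and 2rs·l ∣ x − μy. Then l² ∣ ab. -/
import Mathlib


/-- divisibility claim of Proposition 3.1.2.  Let `a, b, c ≥ 1` with
`gcd(a,b) = 1`, `r = ac`, `s = bc` (so `2rs = 2abc²`), `μ` with `gcd(μ, 2rs) = 1`, and
`d ≡ μ² (mod 4rs)`.  If a prime `l` and integers `x, y` satisfy `x² − dy² = 4a²b²c²`,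
`l ∣ x`, `l ∣ y` and `2rs·l ∣ x − μy`, then `l² ∣ ab`. -/
theorem mu_divisible_prime_sq_dvd
    (a b c : ℤ) (ha : 1 ≤ a) (hb : 1 ≤ b) (hc : 1 ≤ c)
    (hab : Int.gcd a b = 1) (μ d : ℤ)
    (hμ : Int.gcd μ (2 * (a * c) * (b * c)) = 1)
    (hd : (4 * (a * c) * (b * c)) ∣ (d - μ ^ 2))
    (l : ℤ) (hl : Prime l) (x y : ℤ)
    (hxy : x ^ 2 - d * y ^ 2 = 4 * a ^ 2 * b ^ 2 * c ^ 2)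
    (hlx : l ∣ x) (hly : l ∣ y)
    (hcong : (2 * (a * c) * (b * c) * l) ∣ (x - μ * y)) :
    l ^ 2 ∣ a * b := by
  obtain ⟨x', rfl⟩ := hlx
  obtain ⟨y', rfl⟩ := hly
  have hl0 : l ≠ 0 := hl.ne_zero
  obtain ⟨t, ht⟩ := hcong
  obtain ⟨e, he⟩ := hd
  have hx' : x' = μ * y' + 2 * (a * c) * (b * c) * t := by
    have hcancel : l * x' = l * (μ * y' + 2 * (a * c) * (b * c) * t) := by linarith
    exact mul_left_cancel₀ hl0 hcancel
  have hd' : d = μ ^ 2 + 4 * (a * c) * (b * c) * e := by linarith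
  subst hx' hd'
  have hne : (4 * (a * c) * (b * c)) ≠ 0 := by positivity
  have hmain : (4 * (a * c) * (b * c)) *
      (l ^ 2 * (μ * y' * t + (a * c) * (b * c) * t ^ 2 - e * y' ^ 2)) =
      (4 * (a * c) * (b * c)) * (a * b) := by linear_combination hxy
  exact ⟨_, (mul_left_cancel₀ hne hmain).symm⟩
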